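/- Assume μ satisfies (μ1)–(μ3), N > 2s♯, γ ∈ [0,γ₀] (so that the spectral theory for A_μ holds), and f satisfies (f1) and (f2). Then there exist k ∈ ℕ and β ∈ ℝ such that J(u) ≥ β for all u ∈ P_{k+1}; moreover, for such k the functional J is coercive on P_{k+1}, i.e. J(u) → +∞ as ‖u‖ → +∞ with u ∈ P_{k+1}. -/

import Mathlib

open MeasureTheory Filter Topology
open scoped ENNReal RealInnerProductSpace

noncomputable section

abbrev Rn (N : ℕ) := EuclideanSpace ℝ (Fin N)

/-- The Gagliardo-type bilinear form of fractional order `s ∈ [0,1]`,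
with the conventions `⟨u,v⟩_1 = ∫ ∇u·∇v` and `⟨u,v⟩_0 = ∫ u v`. -/
def gBilin (N : ℕ) (cns : ℝ → ℝ) (s : ℝ) (u v : Rn N → ℝ) : ℝ :=
  if s = 1 then ∫ x : Rn N, ⟪gradient u x, gradient v x⟫
  else if s = 0 then ∫ x : Rn N, u x * v x
  else cns s * ∫ x : Rn N, ∫ y : Rn N,
    (u x - u y) * (v x - v y) / ‖x - y‖ ^ ((N : ℝ) + 2 * s)

/-- The squared Gagliardo seminorm `[u]_s ^ 2`, valued in `[0,∞]`. -/
def gagSq (N : ℕ) (cns : ℝ → ℝ) (s : ℝ) (u : Rn N → ℝ) : ℝ≥0∞ :=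
  if s = 1 then ∫⁻ x : Rn N, ENNReal.ofReal (‖gradient u x‖ ^ 2)
  else if s = 0 then ∫⁻ x : Rn N, ENNReal.ofReal (u x ^ 2)
  else ENNReal.ofReal (cns s) * ∫⁻ x : Rn N, ∫⁻ y : Rn N,
    ENNReal.ofReal ((u x - u y) ^ 2 / ‖x - y‖ ^ ((N : ℝ) + 2 * s))

/-- Membership in the space `X₀(Ω)`. -/
def memX0 (N : ℕ) (cns : ℝ → ℝ) (Ω : Set (Rn N)) (μp : Measure ℝ)
    (u : Rn N → ℝ) : Prop :=
  Measurable u ∧ (∀ᵐ x : Rn N, x ∉ Ω → u x = 0) ∧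
    (∫⁻ s in Set.Icc (0 : ℝ) 1, gagSq N cns s u ∂μp) < ⊤

/-- `⟨u,v⟩ = ∫_{[0,1]} ⟨u,v⟩_s dμ⁺(s)`. -/
def innerP (N : ℕ) (cns : ℝ → ℝ) (μp : Measure ℝ) (u v : Rn N → ℝ) : ℝ :=
  ∫ s in Set.Icc (0 : ℝ) 1, gBilin N cns s u v ∂μp

/-- `(u,v) = ∫_{[0,s̄]} ⟨u,v⟩_s dμ⁻(s)`. -/
def innerM (N : ℕ) (cns : ℝ → ℝ) (μm : Measure ℝ) (sbar : ℝ) (u v : Rn N → ℝ) : ℝ :=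
  ∫ s in Set.Icc (0 : ℝ) sbar, gBilin N cns s u v ∂μm

/-- The bilinear form `⟨u,v⟩ - (u,v)` associated with `A_μ`. -/
def formB (N : ℕ) (cns : ℝ → ℝ) (μp μm : Measure ℝ) (sbar : ℝ) (u v : Rn N → ℝ) : ℝ :=
  innerP N cns μp u v - innerM N cns μm sbar u v

/-- `lam` is a Dirichlet eigenvalue of the superposition operator `A_μ`. -/
def IsEigenvalue (N : ℕ) (cns : ℝ → ℝ) (Ω : Set (Rn N)) (μp μm : Measure ℝ) (sbar : ℝ)
    (lam : ℝ) : Prop :=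
  ∃ u : Rn N → ℝ, memX0 N cns Ω μp u ∧ ¬ (u =ᵐ[volume] (0 : Rn N → ℝ)) ∧
    ∀ v : Rn N → ℝ, memX0 N cns Ω μp v →
      formB N cns μp μm sbar u v = lam * ∫ x in Ω, u x * v x

/-- `(ev, e)` is the nondecreasing sequence of Dirichlet eigenvalues of `A_μ`
(counted with multiplicity, diverging to `+∞`) together with corresponding
eigenfunctions, enjoying the variational (minimum) characterization. -/
def IsEigenSystem (N : ℕ) (cns : ℝ → ℝ) (Ω : Set (Rn N)) (μp μm : Measure ℝ) (sbar : ℝ)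
    (ev : ℕ → ℝ) (e : ℕ → Rn N → ℝ) : Prop :=
  0 < ev 0 ∧ Monotone ev ∧ Tendsto ev atTop atTop ∧
  (∀ n, memX0 N cns Ω μp (e n)) ∧
  (∀ n, ¬ (e n =ᵐ[volume] (0 : Rn N → ℝ))) ∧
  (∀ n, ∀ v, memX0 N cns Ω μp v →
    formB N cns μp μm sbar (e n) v = ev n * ∫ x in Ω, e n x * v x) ∧
  (∀ n, (∀ j, j < n → formB N cns μp μm sbar (e n) (e j) = 0) ∧
    ev n = formB N cns μp μm sbar (e n) (e n) / ∫ x in Ω, (e n x) ^ 2 ∧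
    (∀ u, memX0 N cns Ω μp u → ¬ (u =ᵐ[volume] (0 : Rn N → ℝ)) →
      (∀ j, j < n → formB N cns μp μm sbar u (e j) = 0) →
      ev n ≤ formB N cns μp μm sbar u u / ∫ x in Ω, (u x) ^ 2))

/-- The primitive `F(x,t) = ∫₀ᵗ f(x,τ) dτ`. -/
def Fprim {N : ℕ} (f : Rn N → ℝ → ℝ) (x : Rn N) (t : ℝ) : ℝ :=
  ∫ τ in (0 : ℝ)..t, f x τ

/-- The energy functional `J` associated with the problem `A_μ u - λ̄ u = f(x,u)`. -/
def Jfun (N : ℕ) (cns : ℝ → ℝ) (Ω : Set (Rn N)) (μp μm : Measure ℝ) (sbar : ℝ)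
    (f : Rn N → ℝ → ℝ) (lamBar : ℝ) (u : Rn N → ℝ) : ℝ :=
  (1 / 2) * formB N cns μp μm sbar u u - lamBar / 2 * (∫ x in Ω, (u x) ^ 2)
    - ∫ x in Ω, Fprim f x (u x)

/-- The Fréchet derivative of `J`: the value `J'(u)[v]`. -/
def dJ (N : ℕ) (cns : ℝ → ℝ) (Ω : Set (Rn N)) (μp μm : Measure ℝ) (sbar : ℝ)
    (f : Rn N → ℝ → ℝ) (lamBar : ℝ) (u v : Rn N → ℝ) : ℝ :=
  formB N cns μp μm sbar u v - lamBar * (∫ x in Ω, u x * v x) - ∫ x in Ω, f x (u x) * v x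

/-- `u` is a weak solution of `A_μ u - λ̄ u = f(x,u)` in `Ω`, `u = 0` outside `Ω`. -/
def IsWeakSolution (N : ℕ) (cns : ℝ → ℝ) (Ω : Set (Rn N)) (μp μm : Measure ℝ) (sbar : ℝ)
    (f : Rn N → ℝ → ℝ) (lamBar : ℝ) (u : Rn N → ℝ) : Prop :=
  memX0 N cns Ω μp u ∧ ∀ v, memX0 N cns Ω μp v →
    formB N cns μp μm sbar u v = lamBar * (∫ x in Ω, u x * v x) + ∫ x in Ω, f x (u x) * v x

/-- `f` is a Carathéodory function on `Ω × ℝ`. -/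
def Caratheodory {N : ℕ} (Ω : Set (Rn N)) (f : Rn N → ℝ → ℝ) : Prop :=
  (∀ t : ℝ, Measurable fun x => f x t) ∧
    ∀ᵐ x ∂(volume.restrict Ω), Continuous fun t => f x t

/-- Condition (f1): local `L^∞` bounds. -/
def CondF1 {N : ℕ} (Ω : Set (Rn N)) (f : Rn N → ℝ → ℝ) : Prop :=
  ∀ τ : ℝ, 0 < τ → ∃ M : ℝ, ∀ᵐ x ∂(volume.restrict Ω), ∀ t : ℝ, |t| ≤ τ → |f x t| ≤ M

/-- Condition (f2): `f(x,t)/t → 0` as `|t| → ∞`, uniformly a.e. in `Ω`. -/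
def CondF2 {N : ℕ} (Ω : Set (Rn N)) (f : Rn N → ℝ → ℝ) : Prop :=
  ∀ ε : ℝ, 0 < ε → ∃ R : ℝ, 0 < R ∧
    ∀ᵐ x ∂(volume.restrict Ω), ∀ t : ℝ, R ≤ |t| → |f x t| ≤ ε * |t|

/-- Condition (f3): `f(x,t)/t → lam0` as `t → 0`, uniformly a.e. in `Ω`. -/
def CondF3 {N : ℕ} (Ω : Set (Rn N)) (f : Rn N → ℝ → ℝ) (lam0 : ℝ) : Prop :=
  ∀ ε : ℝ, 0 < ε → ∃ δ : ℝ, 0 < δ ∧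
    ∀ᵐ x ∂(volume.restrict Ω), ∀ t : ℝ, t ≠ 0 → |t| < δ → |f x t - lam0 * t| ≤ ε * |t|


lemma gBilin_zero_of_ae {N : ℕ} (cns : ℝ → ℝ) (s : ℝ) (hs : s ≠ 1) (u : Rn N → ℝ)
    (hz : u =ᵐ[volume] (0 : Rn N → ℝ)) : gBilin N cns s u u = 0 := by
  unfold gBilin
  rw [if_neg hs]
  by_cases h0 : s = 0
  · rw [if_pos h0]
    apply integral_eq_zero_of_ae
    filter_upwards [hz] with x hx
    simp [hx]
  · rw [if_neg h0]
    have hmain : (∫ x : Rn N, ∫ y : Rn N,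
        (u x - u y) * (u x - u y) / ‖x - y‖ ^ ((N : ℝ) + 2 * s)) = 0 := by
      apply integral_eq_zero_of_ae
      filter_upwards [hz] with x hx
      have h2 : (fun y : Rn N => (u x - u y) * (u x - u y) / ‖x - y‖ ^ ((N : ℝ) + 2 * s))
          =ᵐ[volume] 0 := by
        filter_upwards [hz] with y hy
        simp only [Pi.zero_apply] at hx hy ⊢
        simp [hx, hy]
      simpa using integral_eq_zero_of_ae h2
    rw [hmain, mul_zero]

lemma innerP_nonneg {N : ℕ} (cns : ℝ → ℝ) (μp : Measure ℝ)
    (hcns : ∀ s ∈ Set.Ioo (0 : ℝ) 1, 0 < cns s) (u : Rn N → ℝ) :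
    0 ≤ innerP N cns μp u u := by
  apply setIntegral_nonneg measurableSet_Icc
  intro s hs
  unfold gBilin
  by_cases h1 : s = 1
  · rw [if_pos h1]; exact integral_nonneg fun x => real_inner_self_nonneg
  rw [if_neg h1]
  by_cases h0 : s = 0
  · rw [if_pos h0]; exact integral_nonneg fun x => mul_self_nonneg _
  rw [if_neg h0]
  have hso : s ∈ Set.Ioo (0 : ℝ) 1 :=
    ⟨lt_of_le_of_ne hs.1 (Ne.symm h0), lt_of_le_of_ne hs.2 h1⟩
  exact mul_nonneg (hcns s hso).le (integral_nonneg fun x => integral_nonneg fun y =>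
    div_nonneg (mul_self_nonneg _) (Real.rpow_nonneg (norm_nonneg _) _))

lemma Fprim_bound {N : ℕ} (f : Rn N → ℝ → ℝ) (x : Rn N) (M t : ℝ)
    (hx : ∀ τ : ℝ, |f x τ| ≤ |τ| + M) : Fprim f x t ≤ 3 / 2 * t ^ 2 + M ^ 2 / 2 := by
  have h1 : ∀ τ ∈ Set.uIoc (0 : ℝ) t, ‖f x τ‖ ≤ |t| + M := by
    intro τ hτ
    have hτt : |τ| ≤ |t| := by
      rcases Set.mem_uIoc.mp hτ with ⟨ha, hb⟩ | ⟨ha, hb⟩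
      · rw [abs_of_pos ha]; exact hb.trans (le_abs_self t)
      · rw [abs_of_nonpos hb]; linarith [neg_abs_le t]
    rw [Real.norm_eq_abs]
    linarith [hx τ]
  have h2 := intervalIntegral.norm_integral_le_of_norm_le_const h1
  rw [Real.norm_eq_abs, sub_zero] at h2
  have h3 : Fprim f x t ≤ (|t| + M) * |t| := by
    calc Fprim f x t ≤ |Fprim f x t| := le_abs_self _
    _ ≤ (|t| + M) * |t| := h2
  nlinarith [sq_abs t, sq_nonneg (|t| - M), abs_nonneg t]

/-- first part of the proof of Proposition 1.1: under (μ1)–(μ3),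
`N > 2s♯`, and (f1)–(f2), there are `k ∈ ℕ` and `β ∈ ℝ` such that `J ≥ β` on
`P_{k+1}` (the orthogonal of the first `k` eigenfunctions); moreover `J` is
coercive on `P_{k+1}`. -/
theorem statement15 (N : ℕ) (hN : 2 ≤ N)
    (Ω : Set (Rn N)) (hΩo : IsOpen Ω) (hΩb : Bornology.IsBounded Ω)
    (cns : ℝ → ℝ) (hcns : ∀ s ∈ Set.Ioo (0 : ℝ) 1, 0 < cns s)
    (μp μm : Measure ℝ) (hfinp : IsFiniteMeasure μp) (hfinm : IsFiniteMeasure μm)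
    (hsuppp : μp (Set.Icc (0 : ℝ) 1)ᶜ = 0) (hsuppm : μm (Set.Icc (0 : ℝ) 1)ᶜ = 0)
    (sbar γ ssharp : ℝ) (hsbar0 : 0 < sbar) (hsbar1 : sbar ≤ 1) (hγ : 0 ≤ γ)
    (hμ1 : 0 < μp (Set.Icc sbar 1))                                   -- (μ1)
    (hμ2 : μm (Set.Icc sbar 1) = 0)                                   -- (μ2)
    (hμ3 : μm (Set.Icc (0 : ℝ) sbar) ≤
      ENNReal.ofReal γ * μp (Set.Icc sbar 1))                          -- (μ3)
    (hs1 : sbar ≤ ssharp) (hs2 : ssharp ≤ 1) (hμs : 0 < μp (Set.Icc ssharp 1))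
    (hNs : 2 * ssharp < (N : ℝ))
    -- the spectral theory for `A_μ` holds (`γ ∈ [0,γ₀]`):
    (ev : ℕ → ℝ) (e : ℕ → Rn N → ℝ)
    (hsys : IsEigenSystem N cns Ω μp μm sbar ev e)
    (f : Rn N → ℝ → ℝ) (hcar : Caratheodory Ω f)
    (hf1 : CondF1 Ω f) (hf2 : CondF2 Ω f)
    (lamBar : ℝ) :
    ∃ (k : ℕ) (β : ℝ),
      (∀ u : Rn N → ℝ, memX0 N cns Ω μp u →
        (∀ j, j < k → formB N cns μp μm sbar u (e j) = 0) →
        β ≤ Jfun N cns Ω μp μm sbar f lamBar u) ∧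
      (∀ M : ℝ, ∃ R : ℝ, 0 < R ∧
        ∀ u : Rn N → ℝ, memX0 N cns Ω μp u →
          (∀ j, j < k → formB N cns μp μm sbar u (e j) = 0) →
          R ≤ Real.sqrt (formB N cns μp μm sbar u u) →
          M ≤ Jfun N cns Ω μp μm sbar f lamBar u) := by
  classical
  obtain ⟨hev0, hmono, htend, hmemE, hneE, hweakE, hchar⟩ := hsys
  -- bound on f : |f x t| ≤ |t| + M a.e.
  obtain ⟨R₀, hR₀pos, hfa⟩ := hf2 1 one_pos
  obtain ⟨M0, hfb⟩ := hf1 R₀ hR₀pos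
  set M : ℝ := max M0 0 with hMdef
  have hM : 0 ≤ M := le_max_right _ _
  have hfc : ∀ᵐ x ∂(volume.restrict Ω), ∀ t : ℝ, |f x t| ≤ |t| + M := by
    filter_upwards [hfa, hfb] with x ha hb t
    by_cases h : |t| ≤ R₀
    · have := hb t h
      have hM0 : M0 ≤ M := le_max_left _ _
      have := abs_nonneg t
      linarith
    · push_neg at h
      have := ha t h.le
      have := abs_nonneg t
      linarith
  -- choose k
  set D : ℝ := max (lamBar + 3) 1 with hDdef
  have hD1 : (1 : ℝ) ≤ D := le_max_right _ _
  have hDl : lamBar + 3 ≤ D := le_max_left _ _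
  obtain ⟨k, hk⟩ := (htend.eventually_ge_atTop (2 * D)).exists
  -- constants
  set c : ℝ := (volume Ω).toReal * (M ^ 2 / 2) with hcdef
  have hc : 0 ≤ c := mul_nonneg ENNReal.toReal_nonneg (by positivity)
  haveI hfinΩ : IsFiniteMeasure (volume.restrict Ω) :=
    ⟨by rw [Measure.restrict_apply_univ]; exact hΩb.measure_lt_top⟩
  -- key estimate
  have key : ∀ u : Rn N → ℝ, memX0 N cns Ω μp u →
      (∀ j, j < k → formB N cns μp μm sbar u (e j) = 0) →
      0 ≤ formB N cns μp μm sbar u u ∧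
      1 / 4 * formB N cns μp μm sbar u u - c ≤ Jfun N cns Ω μp μm sbar f lamBar u := by
    intro u hmem horth
    have hT0 : 0 ≤ ∫ x in Ω, (u x) ^ 2 :=
      setIntegral_nonneg hΩo.measurableSet fun x _ => sq_nonneg _
    by_cases hz : u =ᵐ[volume] (0 : Rn N → ℝ)
    · -- u ≡ 0 a.e.
      have hM0 : innerM N cns μm sbar u u = 0 := by
        apply integral_eq_zero_of_ae
        have hnull : (μm.restrict (Set.Icc (0 : ℝ) sbar)) {(1 : ℝ)} = 0 := by
          have h1 : μm {(1 : ℝ)} ≤ μm (Set.Icc sbar 1) := by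
            apply measure_mono
            intro x hx
            simp only [Set.mem_singleton_iff] at hx
            subst hx
            exact ⟨hsbar1, le_refl 1⟩
          have h2 : (μm.restrict (Set.Icc (0 : ℝ) sbar)) {(1 : ℝ)} ≤ μm {(1 : ℝ)} := by
            rw [Measure.restrict_apply (measurableSet_singleton 1)]
            exact measure_mono Set.inter_subset_left
          rw [hμ2] at h1
          exact le_antisymm (h2.trans h1) zero_le
        rw [Filter.EventuallyEq, ae_iff]
        apply measure_mono_null _ hnull
        intro s hs
        simp only [Set.mem_setOf_eq, Pi.zero_apply] at hs
        simp only [Set.mem_singleton_iff]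
        by_contra h1
        exact hs (gBilin_zero_of_ae cns s h1 u hz)
      have hP0 : 0 ≤ innerP N cns μp u u := innerP_nonneg cns μp hcns u
      have hB0 : 0 ≤ formB N cns μp μm sbar u u := by
        unfold formB; rw [hM0]; linarith
      have hT : (∫ x in Ω, (u x) ^ 2) = 0 := by
        apply integral_eq_zero_of_ae
        apply ae_restrict_of_ae
        filter_upwards [hz] with x hx
        simp only [Pi.zero_apply] at hx
        simp [hx]
      have hF : (∫ x in Ω, Fprim f x (u x)) = 0 := by
        apply integral_eq_zero_of_ae
        apply ae_restrict_of_ae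
        filter_upwards [hz] with x hx
        simp only [Pi.zero_apply] at hx
        simp [Fprim, hx]
      refine ⟨hB0, ?_⟩
      unfold Jfun
      rw [hT, hF]
      linarith
    · -- u ≢ 0
      have hmin := (hchar k).2.2 u hmem hz horth
      have hevk : 2 * D ≤ ev k := hk
      rcases hT0.eq_or_lt with hT | hT
      · exfalso
        rw [← hT, div_zero] at hmin
        linarith
      · have hBT : ev k * (∫ x in Ω, (u x) ^ 2) ≤ formB N cns μp μm sbar u u :=
          (le_div_iff₀ hT).mp hmin
        have hB0 : 0 ≤ formB N cns μp μm sbar u u := by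
          have : 0 ≤ ev k * (∫ x in Ω, (u x) ^ 2) := mul_nonneg (by linarith) hT.le
          linarith
        have hDT : (lamBar + 3) * (∫ x in Ω, (u x) ^ 2) ≤ formB N cns μp μm sbar u u / 2 := by
          have h1 : 2 * D * (∫ x in Ω, (u x) ^ 2) ≤ ev k * (∫ x in Ω, (u x) ^ 2) :=
            mul_le_mul_of_nonneg_right hevk hT.le
          have h2 : (lamBar + 3) * (∫ x in Ω, (u x) ^ 2) ≤ D * (∫ x in Ω, (u x) ^ 2) :=
            mul_le_mul_of_nonneg_right hDl hT.le
          linarith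
        have hu2int : Integrable (fun x => (u x) ^ 2) (volume.restrict Ω) := by
          by_contra h
          rw [integral_undef h] at hT
          exact lt_irrefl 0 hT
        have hgint : Integrable (fun x => 3 / 2 * (u x) ^ 2 + M ^ 2 / 2)
            (volume.restrict Ω) := (hu2int.const_mul _).add (integrable_const _)
        have hgval : (∫ x in Ω, (3 / 2 * (u x) ^ 2 + M ^ 2 / 2)) =
            3 / 2 * (∫ x in Ω, (u x) ^ 2) + c := by
          rw [integral_add (hu2int.const_mul _) (integrable_const _),
            integral_const_mul, integral_const, measureReal_restrict_apply_univ]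
          rw [smul_eq_mul, hcdef, measureReal_def]
        have hFle : (∫ x in Ω, Fprim f x (u x)) ≤
            3 / 2 * (∫ x in Ω, (u x) ^ 2) + c := by
          rw [← hgval]
          by_cases hint : Integrable (fun x => Fprim f x (u x)) (volume.restrict Ω)
          · apply integral_mono_ae hint hgint
            filter_upwards [hfc] with x hx
            exact Fprim_bound f x M (u x) hx
          · rw [integral_undef hint]
            apply integral_nonneg
            intro x
            positivity
        refine ⟨hB0, ?_⟩
        unfold Jfun
        have := hDT
        nlinarith [hFle, hDT]
  refine ⟨k, -c, ?_, ?_⟩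
  · intro u hmem horth
    obtain ⟨hB0, hJ⟩ := key u hmem horth
    linarith
  · intro C
    refine ⟨Real.sqrt (4 * (|C| + c + 1)), Real.sqrt_pos.mpr (by positivity), ?_⟩
    intro u hmem horth hR
    obtain ⟨hB0, hJ⟩ := key u hmem horth
    have h1 : Real.sqrt (4 * (|C| + c + 1)) ^ 2 ≤ Real.sqrt (formB N cns μp μm sbar u u) ^ 2 :=
      pow_le_pow_left₀ (Real.sqrt_nonneg _) hR 2
    rw [Real.sq_sqrt (by positivity), Real.sq_sqrt hB0] at h1
    have := le_abs_self C
    linarith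

end
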